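/- Let a, b, c, d ∈ ℂ with a·d − b·c = 1 and γ(w) = (a·w+b)/(c·w+d). Let f : ℂ → ℂ be analytic at z with f''(z) ≠ 0 and c·f(z)+d ≠ 0, and let g = γ ∘ f (analytic near z). If moreover g''(z) ≠ 0 and c·(D f)(z) + d ≠ 0, where D f (z) = f(z) − 2·f'(z)²/f''(z), then D g (z) = (a·(D f)(z) + b)/(c·(D f)(z) + d). -/

import Mathlib

lemma key_algebra (a b c d u p q : ℂ) (hdet : a * d - b * c = 1) (hq : q ≠ 0)
    (hD : c * u + d ≠ 0) (hE : q * (c * u + d) - 2 * c * p ^ 2 ≠ 0) :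
    (a * u + b) / (c * u + d) - 2 * (p / (c * u + d) ^ 2) ^ 2
        / ((q * (c * u + d) ^ 2 - p * (2 * (c * u + d) ^ 1 * (c * p))) / ((c * u + d) ^ 2) ^ 2)
      = (a * (u - 2 * p ^ 2 / q) + b) / (c * (u - 2 * p ^ 2 / q) + d) := by
  have hD4 : ((c * u + d) ^ 2) ^ 2 ≠ 0 := pow_ne_zero 2 (pow_ne_zero 2 hD)
  have hDE : (c * u + d) * (q * (c * u + d) - 2 * c * p ^ 2) ≠ 0 := mul_ne_zero hD hE
  have e1 : q * (c * u + d) ^ 2 - p * (2 * (c * u + d) ^ 1 * (c * p))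
      = (c * u + d) * (q * (c * u + d) - 2 * c * p ^ 2) := by ring
  have e2 : 2 * (p / (c * u + d) ^ 2) ^ 2 = 2 * p ^ 2 / ((c * u + d) ^ 2) ^ 2 := by
    rw [div_pow]; ring
  rw [e1, e2, div_div_div_cancel_right₀ hD4]
  have e4 : a * (u - 2 * p ^ 2 / q) + b = (a * (u * q - 2 * p ^ 2) + b * q) / q := by
    field_simp
  have e5 : c * (u - 2 * p ^ 2 / q) + d = (q * (c * u + d) - 2 * c * p ^ 2) / q := by
    field_simp; ring
  rw [e4, e5, div_div_div_cancel_right₀ hq]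
  rw [div_sub_div _ _ hD hDE, div_eq_div_iff (mul_ne_zero hD hDE) hE]
  linear_combination (2 * p ^ 2 * (c * u + d) * (q * (c * u + d) - 2 * c * p ^ 2)) * hdet

/-- Projective equivariance of the equivariant derivative
`D f (z) = f(z) − 2·f'(z)²/f''(z)` (paper's Proposition on the operators 𝒟 and 𝒮). -/
theorem equivariant_derivative_equivariance
    (a b c d : ℂ) (hdet : a * d - b * c = 1)
    (f g : ℂ → ℂ) (z : ℂ)
    (hf : AnalyticAt ℂ f z)
    (hf'' : deriv (deriv f) z ≠ 0)
    (hden : c * f z + d ≠ 0)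
    (hg : g = fun w => (a * f w + b) / (c * f w + d))
    (hg'' : deriv (deriv g) z ≠ 0)
    (hden2 : c * (f z - 2 * (deriv f z) ^ 2 / deriv (deriv f) z) + d ≠ 0) :
    g z - 2 * (deriv g z) ^ 2 / deriv (deriv g) z
      = (a * (f z - 2 * (deriv f z) ^ 2 / deriv (deriv f) z) + b)
        / (c * (f z - 2 * (deriv f z) ^ 2 / deriv (deriv f) z) + d) := by
  subst hg
  have hanal : ∀ᶠ w in nhds z, AnalyticAt ℂ f w := hf.eventually_analyticAt
  have hcont : ContinuousAt (fun w => c * f w + d) z :=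
    ((continuousAt_const.mul hf.continuousAt).add continuousAt_const)
  have hne : ∀ᶠ w in nhds z, c * f w + d ≠ 0 := hcont.eventually_ne hden
  have hderiv : ∀ᶠ w in nhds z,
      deriv (fun w => (a * f w + b) / (c * f w + d)) w
        = deriv f w / (c * f w + d) ^ 2 := by
    filter_upwards [hanal, hne] with w hw hnw
    have hdf : HasDerivAt f (deriv f w) w := hw.differentiableAt.hasDerivAt
    have h1 : HasDerivAt (fun w => a * f w + b) (a * deriv f w) w :=
      (hdf.const_mul a).add_const b
    have h2 : HasDerivAt (fun w => c * f w + d) (c * deriv f w) w :=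
      (hdf.const_mul c).add_const d
    have hnum : a * deriv f w * (c * f w + d) - (a * f w + b) * (c * deriv f w)
        = deriv f w := by linear_combination deriv f w * hdet
    rw [(h1.fun_div h2 hnw).deriv, hnum]
  have hg1 : deriv (fun w => (a * f w + b) / (c * f w + d)) z
      = deriv f z / (c * f z + d) ^ 2 := hderiv.self_of_nhds
  have hdfz : HasDerivAt f (deriv f z) z := hf.differentiableAt.hasDerivAt
  have hAO : AnalyticOnNhd ℂ f {w | AnalyticAt ℂ f w} := fun _ hw => hw
  have hdf2 : HasDerivAt (deriv f) (deriv (deriv f) z) z :=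
    ((hAO.deriv z hf).differentiableAt).hasDerivAt
  have h2 : HasDerivAt (fun w => c * f w + d) (c * deriv f z) z :=
    (hdfz.const_mul c).add_const d
  have hpow : HasDerivAt (fun w => (c * f w + d) ^ 2)
      (2 * (c * f z + d) ^ 1 * (c * deriv f z)) z := h2.pow 2
  have hDne : (c * f z + d) ^ 2 ≠ 0 := pow_ne_zero 2 hden
  have hquot : HasDerivAt (fun w => deriv f w / (c * f w + d) ^ 2)
      ((deriv (deriv f) z * (c * f z + d) ^ 2
        - deriv f z * (2 * (c * f z + d) ^ 1 * (c * deriv f z))) / ((c * f z + d) ^ 2) ^ 2) z :=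
    hdf2.div hpow hDne
  have hg2 : deriv (deriv (fun w => (a * f w + b) / (c * f w + d))) z
      = (deriv (deriv f) z * (c * f z + d) ^ 2
        - deriv f z * (2 * (c * f z + d) ^ 1 * (c * deriv f z))) / ((c * f z + d) ^ 2) ^ 2 := by
    rw [Filter.EventuallyEq.deriv_eq hderiv, hquot.deriv]
  have hE : deriv (deriv f) z * (c * f z + d) - 2 * c * (deriv f z) ^ 2 ≠ 0 := by
    intro h
    apply hden2
    field_simp
    linear_combination h
  rw [hg1, hg2]
  exact key_algebra a b c d (f z) (deriv f z) (deriv (deriv f) z) hdet hf'' hden hE
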